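/- Let (Ω, 𝓕, μ) be a probability space, let f : ℝ^d → ℝ be differentiable with gradient ∇f, and let G : ℝ^d → Ω → ℝ^d be a stochastic gradient oracle such that: (i) for every y, z ∈ ℝ^d and every ω ∈ Ω, ‖G y ω − G z ω‖ ≤ L‖y − z‖; (ii) for every y ∈ ℝ^d, ∫ G y ω dμ(ω) = ∇f(y) (with ω ↦ G y ω integrable). Let ε : Ω → ℝ^d be measurable with ‖ε ω‖ ≤ ρ · D₀ for μ-a.e. ω, where ρ, D₀ > 0. Then for every x ∈ ℝ^d and every η > 0 (assuming the integrands below are integrable): η · ∫ ⟨∇f(x), ∇f(x) − G (x + ε ω) ω⟩ dμ(ω) ≤ (L η² / 2) ‖∇f(x)‖² + (L D₀² ρ²) / 2. -/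
import Mathlib


open RealInnerProductSpace MeasureTheory

theorem presam_lemma1 {d : ℕ} {Ω : Type*} [MeasurableSpace Ω]
    (μ : Measure Ω) [IsProbabilityMeasure μ]
    (f : EuclideanSpace ℝ (Fin d) → ℝ)
    (f' : EuclideanSpace ℝ (Fin d) → EuclideanSpace ℝ (Fin d))
    (hf : ∀ x, HasGradientAt f (f' x) x)
    (G : EuclideanSpace ℝ (Fin d) → Ω → EuclideanSpace ℝ (Fin d))
    (L : ℝ) (hL : 0 < L)
    (hLip : ∀ y z ω, ‖G y ω - G z ω‖ ≤ L * ‖y - z‖)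
    (hIntG : ∀ y, Integrable (fun ω => G y ω) μ)
    (hUnbiased : ∀ y, ∫ ω, G y ω ∂μ = f' y)
    (ε : Ω → EuclideanSpace ℝ (Fin d)) (hεm : Measurable ε)
    (ρ D₀ : ℝ) (hρ : 0 < ρ) (hD₀ : 0 < D₀)
    (hε : ∀ᵐ ω ∂μ, ‖ε ω‖ ≤ ρ * D₀)
    (x : EuclideanSpace ℝ (Fin d)) (η : ℝ) (hη : 0 < η)
    (hInt : Integrable (fun ω => ⟪f' x, f' x - G (x + ε ω) ω⟫) μ) :
    η * ∫ ω, ⟪f' x, f' x - G (x + ε ω) ω⟫ ∂μ ≤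
      L * η ^ 2 / 2 * ‖f' x‖ ^ 2 + L * D₀ ^ 2 * ρ ^ 2 / 2 := by
  have hInt2 : Integrable (fun ω => ⟪f' x, f' x - G x ω⟫) μ := by
    have := ((hIntG x).const_inner (𝕜 := ℝ) (f' x)).neg.add
      (integrable_const (μ := μ) ⟪f' x, f' x⟫)
    refine this.congr (Filter.Eventually.of_forall fun ω => ?_)
    simp [inner_sub_right]; ring
  have hInt1 : Integrable
      (fun ω => ⟪f' x, G x ω - G (x + ε ω) ω⟫) μ := by
    refine (hInt.sub hInt2).congr (Filter.Eventually.of_forall fun ω => ?_)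
    simp [inner_sub_right]
  have hsplit : (∫ ω, ⟪f' x, f' x - G (x + ε ω) ω⟫ ∂μ)
      = (∫ ω, ⟪f' x, G x ω - G (x + ε ω) ω⟫ ∂μ)
        + ∫ ω, ⟪f' x, f' x - G x ω⟫ ∂μ := by
    rw [← integral_add hInt1 hInt2]
    congr 1; funext ω; simp [inner_sub_right]
  have h2 : (∫ ω, ⟪f' x, f' x - G x ω⟫ ∂μ) = 0 := by
    have : (∫ ω, ⟪f' x, f' x - G x ω⟫ ∂μ)
        = ⟪f' x, f' x⟫ - ⟪f' x, ∫ ω, G x ω ∂μ⟫ := by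
      simp only [inner_sub_right]
      rw [integral_sub (integrable_const _) ((hIntG x).const_inner (𝕜 := ℝ) (f' x)),
        integral_const, integral_inner (hIntG x)]
      simp
    rw [this, hUnbiased]; ring
  have h1 : (∫ ω, ⟪f' x, G x ω - G (x + ε ω) ω⟫ ∂μ)
      ≤ ‖f' x‖ * (L * (ρ * D₀)) := by
    have hconst : (∫ _ : Ω, ‖f' x‖ * (L * (ρ * D₀)) ∂μ)
        = ‖f' x‖ * (L * (ρ * D₀)) := by simp
    rw [← hconst]
    refine integral_mono_ae hInt1 (integrable_const _) ?_
    filter_upwards [hε] with ω hω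
    calc ⟪f' x, G x ω - G (x + ε ω) ω⟫
        ≤ ‖f' x‖ * ‖G x ω - G (x + ε ω) ω‖ := real_inner_le_norm _ _
      _ ≤ ‖f' x‖ * (L * (ρ * D₀)) := by
          have h := hLip x (x + ε ω) ω
          have : ‖x - (x + ε ω)‖ = ‖ε ω‖ := by
            rw [show x - (x + ε ω) = -(ε ω) by abel, norm_neg]
          rw [this] at h
          have : ‖G x ω - G (x + ε ω) ω‖ ≤ L * (ρ * D₀) :=
            h.trans (by nlinarith)
          exact mul_le_mul_of_nonneg_left this (norm_nonneg _)
  have hIle : (∫ ω, ⟪f' x, f' x - G (x + ε ω) ω⟫ ∂μ)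
      ≤ ‖f' x‖ * (L * (ρ * D₀)) := by rw [hsplit, h2, add_zero]; exact h1
  have hη' : η * (∫ ω, ⟪f' x, f' x - G (x + ε ω) ω⟫ ∂μ)
      ≤ η * (‖f' x‖ * (L * (ρ * D₀))) := by
    exact mul_le_mul_of_nonneg_left hIle hη.le
  refine hη'.trans ?_
  nlinarith [sq_nonneg (η * ‖f' x‖ - ρ * D₀), hL.le, norm_nonneg (f' x)]
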